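/- arXiv:1709.06592 — 2 statements merged into one kernel-verified Lean document; each statement's English description precedes it below -/
import Mathlib

section
/- Let V be a Hilbert space, Λ a normed space, a : V×V → ℝ a continuous bilinear form, b : V×Λ → ℝ continuous bilinear, F ∈ V', G ∈ Λ'. Let K = {v ∈ V : b(v,μ) = 0 for all μ ∈ Λ}. If a is coercive on K (a(v,v) ≥ α‖v‖² for v ∈ K, α>0) and b satisfies the inf-sup condition sup_{u∈V} b(u,μ)/‖u‖_V ≥ β‖μ‖_Λ for all μ ∈ Λ with β>0, then the saddle point problem a(u,v) − b(v,λ) = F(v) for all v ∈ V, b(u,μ) = G(μ) for all μ ∈ Λ, has a unique solution (u,λ) ∈ V×Λ, with ‖u‖_V + ‖λ‖_Λ ≤ C(‖F‖_{V'} + ‖G‖_{Λ'}). -/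
open RealInnerProductSpace InnerProductSpace

/-- The "Riesz representation" of the bilinear form `b` in its second argument:
`rieszB b μ` is the element of `V` with `⟪rieszB b μ, u⟫ = b u μ` for all `u`. -/
noncomputable def rieszB {V Λ : Type*} [NormedAddCommGroup V] [InnerProductSpace ℝ V]
    [CompleteSpace V] [NormedAddCommGroup Λ] [NormedSpace ℝ Λ]
    (b : V →L[ℝ] Λ →L[ℝ] ℝ) : Λ →L[ℝ] V :=
  { toLinearMap :=
      { toFun := fun μ => (InnerProductSpace.toDual ℝ V).symm (b.flip μ)
        map_add' := fun μ ν => by simp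
        map_smul' := fun c μ => by simp }
    cont := (InnerProductSpace.toDual ℝ V).symm.continuous.comp b.flip.continuous }

theorem inner_rieszB {V Λ : Type*} [NormedAddCommGroup V] [InnerProductSpace ℝ V]
    [CompleteSpace V] [NormedAddCommGroup Λ] [NormedSpace ℝ Λ]
    (b : V →L[ℝ] Λ →L[ℝ] ℝ) (μ : Λ) (u : V) :
    ⟪rieszB b μ, u⟫_ℝ = b u μ := by
  simp [rieszB, InnerProductSpace.toDual_symm_apply]

set_option maxHeartbeats 1600000

/-- Babuška–Brezzi well-posedness of the saddle point problem. `V` is a Hilbert space,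
`Λ` a Banach space, `a : V×V → ℝ` and `b : V×Λ → ℝ` continuous bilinear forms,
`F ∈ V'`, `G ∈ Λ'`. If `a` is coercive on the kernel
`K = {v : ∀ μ, b(v,μ) = 0}` and `b` satisfies the inf-sup condition
`sup_u b(u,μ)/‖u‖ ≥ β ‖μ‖`, then the problem
`a(u,v) − b(v,λ) = F(v) ∀v`, `b(u,μ) = G(μ) ∀μ` has a unique solution `(u,λ)`, with
`‖u‖ + ‖λ‖ ≤ C (‖F‖ + ‖G‖)` for a constant `C` depending only on the data forms. -/
theorem stmt8 (V Λ : Type*)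
    [NormedAddCommGroup V] [InnerProductSpace ℝ V] [CompleteSpace V]
    [NormedAddCommGroup Λ] [NormedSpace ℝ Λ] [CompleteSpace Λ]
    (a : V →L[ℝ] V →L[ℝ] ℝ) (b : V →L[ℝ] Λ →L[ℝ] ℝ)
    (F : V →L[ℝ] ℝ) (G : Λ →L[ℝ] ℝ)
    (α : ℝ) (hα : 0 < α)
    (hcoer : ∀ v : V, (∀ μ : Λ, b v μ = 0) → α * ‖v‖^2 ≤ a v v)
    (β : ℝ) (hβ : 0 < β)
    (hinfsup : ∀ μ : Λ, β * ‖μ‖ ≤ ⨆ u : V, b u μ / ‖u‖) :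
    ∃ C : ℝ, 0 < C ∧
      (∃! p : V × Λ, (∀ v : V, a p.1 v - b v p.2 = F v) ∧ (∀ μ : Λ, b p.1 μ = G μ)) ∧
      (∀ p : V × Λ, ((∀ v : V, a p.1 v - b v p.2 = F v) ∧ (∀ μ : Λ, b p.1 μ = G μ)) →
        ‖p.1‖ + ‖p.2‖ ≤ C * (‖F‖ + ‖G‖)) := by
  classical
  set T : Λ →L[ℝ] V := rieszB b with hTdef
  have hTf : ∀ (μ : Λ) (u : V), ⟪T μ, u⟫_ℝ = b u μ := fun μ u => inner_rieszB b μ u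
  have hTlow : ∀ μ : Λ, β * ‖μ‖ ≤ ‖T μ‖ := by
    intro μ
    refine (hinfsup μ).trans (ciSup_le fun u => ?_)
    rcases eq_or_ne u 0 with rfl | hu
    · simp [norm_nonneg]
    · rw [div_le_iff₀ (norm_pos_iff.mpr hu)]
      calc b u μ = ⟪T μ, u⟫_ℝ := (hTf μ u).symm
        _ ≤ ‖T μ‖ * ‖u‖ := real_inner_le_norm _ _
  have hTanti : AntilipschitzWith (β⁻¹.toNNReal) T := by
    apply ContinuousLinearMap.antilipschitz_of_bound
    intro x
    rw [Real.coe_toNNReal _ (inv_nonneg.mpr hβ.le), ← div_eq_inv_mul, le_div_iff₀ hβ]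
    calc ‖x‖ * β = β * ‖x‖ := by ring
      _ ≤ ‖T x‖ := hTlow x
  set M : Submodule ℝ V := LinearMap.range (T : Λ →ₗ[ℝ] V) with hMdef
  have hMclosed : IsClosed (M : Set V) := hTanti.isClosed_range T.uniformContinuous
  haveI : CompleteSpace M := hMclosed.completeSpace_coe
  have hmemM : ∀ μ : Λ, T μ ∈ M := fun μ => LinearMap.mem_range_self _ μ
  have hK : ∀ v : V, v ∈ Mᗮ ↔ ∀ μ : Λ, b v μ = 0 := by
    intro v
    rw [Submodule.mem_orthogonal]
    constructor
    · intro h μ; rw [← hTf]; exact h _ (hmemM μ)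
    · rintro h x ⟨μ, rfl⟩; rw [ContinuousLinearMap.coe_coe, hTf]; exact h μ
  -- ### Existence
  have hTinj : LinearMap.ker (T : Λ →ₗ[ℝ] V) = ⊥ := by
    rw [LinearMap.ker_eq_bot, ContinuousLinearMap.coe_coe]
    intro x y hxy
    have hx := hTlow (x - y)
    rw [map_sub, hxy, sub_self, norm_zero] at hx
    have : ‖x - y‖ ≤ 0 := by nlinarith [norm_nonneg (x - y)]
    rwa [← sub_eq_zero, ← norm_le_zero_iff]
  set Tc : Λ →L[ℝ] M :=
    T.codRestrict M (by rw [hMdef] at *; exact fun μ => LinearMap.mem_range_self _ μ) with hTc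
  have hTcKer : LinearMap.ker (Tc : Λ →ₗ[ℝ] M) = ⊥ := (ContinuousLinearMap.ker_codRestrict _ _ _).trans hTinj
  have hTcRange : LinearMap.range (Tc : Λ →ₗ[ℝ] M) = ⊤ := by
    rw [Submodule.eq_top_iff']
    rintro ⟨x, hx⟩
    rw [hMdef] at hx
    obtain ⟨μ, rfl⟩ := hx
    exact ⟨μ, rfl⟩
  set e : Λ ≃L[ℝ] M := ContinuousLinearEquiv.ofBijective Tc hTcKer hTcRange with he
  have heapp : ∀ μ : Λ, ((e μ : M) : V) = T μ := fun μ => rfl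
  set u1 : M := (InnerProductSpace.toDual ℝ M).symm (G.comp (e.symm : M →L[ℝ] Λ)) with hu1def
  have hu1 : ∀ μ : Λ, ⟪T μ, (u1 : V)⟫_ℝ = G μ := by
    intro μ
    rw [← heapp, ← Submodule.coe_inner, real_inner_comm, InnerProductSpace.toDual_symm_apply]
    simp
  set N : Submodule ℝ V := Mᗮ with hN
  set aN : N →L[ℝ] N →L[ℝ] ℝ := a.bilinearComp N.subtypeL N.subtypeL with haN
  have hcoN : IsCoercive aN := by
    refine ⟨α, hα, fun x => ?_⟩
    have hx : ∀ μ : Λ, b (x : V) μ = 0 := (hK _).mp x.2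
    have := hcoer x hx
    calc α * ‖x‖ * ‖x‖ = α * ‖(x : V)‖ ^ 2 := by rw [Submodule.coe_norm]; ring
      _ ≤ a x x := this
      _ = aN x x := by rw [haN, ContinuousLinearMap.bilinearComp_apply]; rfl
  set f1 : N →L[ℝ] ℝ := (F - a (u1 : V)).comp N.subtypeL with hf1
  set u0 : N :=
    hcoN.continuousLinearEquivOfBilin.symm ((InnerProductSpace.toDual ℝ N).symm f1) with hu0def
  have hu0 : ∀ z : N, a (u0 : V) (z : V) = F z - a (u1 : V) z := by
    intro z
    have h0 : hcoN.continuousLinearEquivOfBilin u0 = (InnerProductSpace.toDual ℝ N).symm f1 :=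
      hcoN.continuousLinearEquivOfBilin.apply_symm_apply _
    have h1 : aN u0 z = f1 z := by
      rw [← hcoN.continuousLinearEquivOfBilin_apply u0 z, h0,
        InnerProductSpace.toDual_symm_apply]
    have h2 : f1 z = F z - a (u1 : V) z := by
      rw [hf1]; simp [ContinuousLinearMap.comp_apply]
    have h3 : aN u0 z = a (u0 : V) (z : V) := by
      simp [haN, ContinuousLinearMap.bilinearComp_apply]
    rw [← h3, h1, h2]
  set u : V := (u0 : V) + (u1 : V) with hu
  set w : V := (InnerProductSpace.toDual ℝ V).symm (a u - F) with hw
  have hwv : ∀ v : V, ⟪w, v⟫_ℝ = a u v - F v := by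
    intro v; rw [hw, InnerProductSpace.toDual_symm_apply]; simp
  have hwM : w ∈ M := by
    rw [← Submodule.orthogonal_orthogonal M, Submodule.mem_orthogonal]
    intro z hz
    rw [real_inner_comm, hwv z]
    have h3 := hu0 ⟨z, hz⟩
    have h4 : a u z = a (u0 : V) z + a (u1 : V) z := by rw [hu]; simp
    simp only [Submodule.coe_mk] at h3
    rw [h4, h3]; ring
  rw [hMdef] at hwM
  obtain ⟨lam, hlam⟩ := hwM
  have hex1 : ∀ v : V, a u v - b v lam = F v := by
    intro v
    have : b v lam = ⟪w, v⟫_ℝ := by rw [← hlam, ContinuousLinearMap.coe_coe, hTf]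
    rw [this, hwv]; ring
  have hex2 : ∀ μ : Λ, b u μ = G μ := by
    intro μ
    have h5 : ⟪T μ, (u0 : V)⟫_ℝ = 0 := by
      rw [hTf]; exact (hK _).mp u0.2 μ
    have : b u μ = ⟪T μ, u⟫_ℝ := (hTf μ u).symm
    rw [this, hu, inner_add_right, h5, hu1, zero_add]
  -- ### Constants
  set A : ℝ := ‖a‖ with hA
  have hA0 : 0 ≤ A := norm_nonneg a
  set D : ℝ := β ^ 2 + A * β + α * β + A ^ 2 + α * A + 1 with hD
  have hD0 : 0 < D := by positivity
  clear_value D A w u u0 f1 aN u1 e Tc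
  refine ⟨D / (α * β ^ 2), div_pos hD0 (by positivity), ?_, ?_⟩
  · -- ### Unique existence
    refine ⟨(u, lam), ⟨hex1, hex2⟩, ?_⟩
    rintro ⟨u', lam'⟩ ⟨hq1, hq2⟩
    dsimp only at hq1 hq2
    clear! hTanti hTdef e Tc u0 u1 f1 aN w hMclosed hmemM hK hMdef hTinj hD hD0 hA hA0
    have hdb : ∀ μ : Λ, b (u' - u) μ = 0 := by
      intro μ
      have h1 := hq2 μ
      have h2 := hex2 μ
      simp only [map_sub, ContinuousLinearMap.sub_apply]
      linarith
    have hdeq : ∀ v : V, a (u' - u) v - b v (lam' - lam) = 0 := by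
      intro v
      have h1 := hq1 v
      have h2 := hex1 v
      simp only [map_sub, ContinuousLinearMap.sub_apply]
      linarith
    have hd1 : u' - u = 0 := by
      have h1 := hdeq (u' - u)
      have h2 := hdb (lam' - lam)
      have h3 : a (u' - u) (u' - u) = 0 := by
        simp only [map_sub, ContinuousLinearMap.sub_apply] at h1 h2 ⊢
        linarith
      have h4 := hcoer (u' - u) hdb
      have h5 : ‖u' - u‖ ^ 2 = 0 := by nlinarith [sq_nonneg ‖u' - u‖]
      have h6 : ‖u' - u‖ = 0 := by
        have := pow_eq_zero_iff (n := 2) (by norm_num) |>.mp h5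
        exact this
      rwa [norm_eq_zero] at h6
    have hbv : ∀ v : V, b v (lam' - lam) = 0 := by
      intro v
      have h1 := hdeq v
      rw [hd1] at h1
      simp only [map_zero, ContinuousLinearMap.zero_apply, zero_sub, neg_eq_zero] at h1
      exact h1
    have hd2 : lam' - lam = 0 := by
      have h1 : ⟪T (lam' - lam), T (lam' - lam)⟫_ℝ = 0 := by
        rw [hTf]; exact hbv _
      have h2 : T (lam' - lam) = 0 := by rwa [inner_self_eq_zero] at h1
      have h3 := hTlow (lam' - lam)
      rw [h2, norm_zero] at h3
      have h4 : ‖lam' - lam‖ = 0 := le_antisymm (by nlinarith) (norm_nonneg _)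
      rwa [norm_eq_zero] at h4
    exact Prod.ext (sub_eq_zero.mp hd1) (sub_eq_zero.mp hd2)
  · -- ### A priori bound
    rintro ⟨u', lam'⟩ ⟨hp1, hp2⟩
    dsimp only at hp1 hp2 ⊢
    clear! hTanti hTdef e Tc u0 u1 f1 aN w u lam hTinj hD0
    obtain ⟨P, hPM, hQN⟩ : ∃ P : V, P ∈ M ∧ u' - P ∈ Mᗮ :=
      ⟨(M.orthogonalProjection u' : V), Submodule.coe_mem _,
        M.sub_starProjection_mem_orthogonal u'⟩
    have hQb : ∀ μ : Λ, b (u' - P) μ = 0 := (hK _).mp hQN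
    -- bound on ‖P‖
    obtain ⟨μ1, hμ1⟩ : ∃ μ1, T μ1 = P := by rw [hMdef] at hPM; exact hPM
    have eG : ‖P‖ * ‖P‖ = G μ1 := by
      have h1 : ⟪T μ1, u'⟫_ℝ = G μ1 := by rw [hTf]; exact hp2 μ1
      have h2 : ⟪T μ1, u' - P⟫_ℝ = 0 := by rw [hTf]; exact hQb μ1
      have h3 : ⟪T μ1, P⟫_ℝ = G μ1 := by
        rw [inner_sub_right] at h2; linarith
      rw [hμ1] at h3
      rw [← real_inner_self_eq_norm_mul_norm, h3]
    have hg1 : G μ1 ≤ ‖G‖ * ‖μ1‖ :=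
      (le_abs_self _).trans (by simpa [Real.norm_eq_abs] using G.le_opNorm μ1)
    have hg2 : β * ‖μ1‖ ≤ ‖P‖ := by rw [← hμ1]; exact hTlow μ1
    have I2 : β * ‖P‖ ≤ ‖G‖ := by
      rcases (norm_nonneg P).eq_or_lt with h0 | h0
      · rw [← h0, mul_zero]; exact norm_nonneg G
      · have h6 : (β * ‖P‖) * ‖P‖ ≤ ‖G‖ * ‖P‖ := by nlinarith [norm_nonneg G]
        exact le_of_mul_le_mul_right h6 h0
    -- bound on ‖u' - P‖
    have hc := hcoer (u' - P) hQb
    have ha1 : a u' (u' - P) = F (u' - P) := by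
      have h1 := hp1 (u' - P)
      have h2 := hQb lam'
      linarith
    have ha2 : a (u' - P) (u' - P) = F (u' - P) - a P (u' - P) := by
      have h1 := ha1
      simp only [map_sub, ContinuousLinearMap.sub_apply] at h1 ⊢
      linarith
    have hf1b : F (u' - P) ≤ ‖F‖ * ‖u' - P‖ :=
      (le_abs_self _).trans (by simpa [Real.norm_eq_abs] using F.le_opNorm (u' - P))
    have hab : ‖a P (u' - P)‖ ≤ A * ‖P‖ * ‖u' - P‖ := by rw [hA]; exact a.le_opNorm₂ _ _
    have hab2 : -(A * ‖P‖ * ‖u' - P‖) ≤ a P (u' - P) := by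
      rw [Real.norm_eq_abs] at hab
      linarith [neg_abs_le (a P (u' - P))]
    have I1 : α * ‖u' - P‖ ≤ ‖F‖ + A * ‖P‖ := by
      rcases (norm_nonneg (u' - P)).eq_or_lt with h0 | h0
      · rw [← h0, mul_zero]; positivity
      · have h6 : (α * ‖u' - P‖) * ‖u' - P‖ ≤ (‖F‖ + A * ‖P‖) * ‖u' - P‖ := by
          nlinarith [hc, ha2, hf1b, hab2]
        exact le_of_mul_le_mul_right h6 h0
    -- bound on ‖lam'‖
    have hTl : ‖T lam'‖ ≤ A * ‖u'‖ + ‖F‖ := by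
      have h1 := hp1 (T lam')
      have h2 : ⟪T lam', T lam'⟫_ℝ = b (T lam') lam' := hTf _ _
      have h3 : ‖T lam'‖ * ‖T lam'‖ = a u' (T lam') - F (T lam') := by
        rw [← real_inner_self_eq_norm_mul_norm, h2]; linarith
      have h4 : ‖a u' (T lam')‖ ≤ A * ‖u'‖ * ‖T lam'‖ := by rw [hA]; exact a.le_opNorm₂ _ _
      have h5 : ‖F (T lam')‖ ≤ ‖F‖ * ‖T lam'‖ := F.le_opNorm _
      rcases (norm_nonneg (T lam')).eq_or_lt with h0 | h0
      · rw [← h0]; positivity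
      · have h6 : ‖T lam'‖ * ‖T lam'‖ ≤ (A * ‖u'‖ + ‖F‖) * ‖T lam'‖ := by
          rw [Real.norm_eq_abs] at h4 h5
          nlinarith [le_abs_self (a u' (T lam')), neg_abs_le (F (T lam'))]
        exact le_of_mul_le_mul_right h6 h0
    have I3 : β * ‖lam'‖ ≤ A * ‖u'‖ + ‖F‖ := (hTlow lam').trans hTl
    have I4 : ‖u'‖ ≤ ‖u' - P‖ + ‖P‖ := by
      have h7 : (u' - P) + P = u' := by abel
      calc ‖u'‖ = ‖(u' - P) + P‖ := by rw [h7]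
        _ ≤ _ := norm_add_le _ _
    -- combine
    rw [hD, div_mul_eq_mul_div, le_div_iff₀ (by positivity)]
    have hS1 : β * (α * ‖u' - P‖) ≤ β * (‖F‖ + A * ‖P‖) := mul_le_mul_of_nonneg_left I1 hβ.le
    have hS2 : α * (β * ‖P‖) ≤ α * ‖G‖ := mul_le_mul_of_nonneg_left I2 hα.le
    have hS3 : A * (β * ‖P‖) ≤ A * ‖G‖ := mul_le_mul_of_nonneg_left I2 hA0
    have hJ1 : α * β * ‖u'‖ ≤ β * ‖F‖ + (A + α) * ‖G‖ := by
      have hS4 : (α * β) * ‖u'‖ ≤ (α * β) * (‖u' - P‖ + ‖P‖) :=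
        mul_le_mul_of_nonneg_left I4 (by positivity)
      nlinarith [hS1, hS2, hS3, hS4]
    have hS5 : (α * β) * (β * ‖lam'‖) ≤ (α * β) * (A * ‖u'‖ + ‖F‖) :=
      mul_le_mul_of_nonneg_left I3 (by positivity)
    have hS6 : A * (α * β * ‖u'‖) ≤ A * (β * ‖F‖ + (A + α) * ‖G‖) :=
      mul_le_mul_of_nonneg_left hJ1 hA0
    have hS7 : β * (α * β * ‖u'‖) ≤ β * (β * ‖F‖ + (A + α) * ‖G‖) :=
      mul_le_mul_of_nonneg_left hJ1 hβ.le
    nlinarith [hS5, hS6, hS7, mul_nonneg hA0 (norm_nonneg F), norm_nonneg F, norm_nonneg G,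
      mul_nonneg (mul_nonneg hA0 hA0) (norm_nonneg F),
      mul_nonneg hα.le (mul_nonneg hA0 (norm_nonneg F)),
      mul_nonneg (mul_nonneg hβ.le hβ.le) (norm_nonneg G)]
end

section
/- Let Ω = (−1,1) ⊂ ℝ, s ∈ (0,1), and u(x) = c(s)(1−x²)₊^s with c(s) > 0. Then there exists C(s) > 0 such that for all x ∈ (1,2), the nonlocal normal derivative satisfies |𝒩_s u(x)| > C(s)/(x−1)^s, where 𝒩_s u(x) = C(1,s) ∫_{−1}^{1} (u(x)−u(y))/|x−y|^{1+2s} dy. -/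
open MeasureTheory Set Real

/-- Let `Ω = (−1,1) ⊂ ℝ`, `s ∈ (0,1)`, and `u(x) = c(s)(1−x²)₊^s` with `c(s) > 0`.
Then there exists `C(s) > 0` such that for all `x ∈ (1,2)`, the nonlocal normal
derivative satisfies `|𝒩_s u(x)| > C(s)/(x−1)^s`, where
`𝒩_s u(x) = C(1,s) ∫_{−1}^{1} (u(x)−u(y))/|x−y|^{1+2s} dy` and
`C(1,s) = 2^{2s} s Γ(s+1/2)/(√π Γ(1−s))`. -/
theorem stmt9 (s : ℝ) (hs : s ∈ Set.Ioo (0:ℝ) 1) (c : ℝ) (hc : 0 < c)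
    (u : ℝ → ℝ) (hu : ∀ x, u x = c * (max (1 - x^2) 0) ^ s)
    (C1s : ℝ) (hC1s : C1s = 2 ^ (2*s) * s * Real.Gamma (s + 1/2) /
      (Real.sqrt Real.pi * Real.Gamma (1 - s))) :
    ∃ C : ℝ, 0 < C ∧ ∀ x ∈ Set.Ioo (1:ℝ) 2,
      C / (x - 1) ^ s < |C1s * ∫ y in Set.Ioo (-1:ℝ) 1, (u x - u y) / |x - y| ^ (1 + 2*s)| := by
  obtain ⟨hs0, hs1⟩ := hs
  have hC1pos : 0 < C1s := by
    have g1 : 0 < Real.Gamma (s + 1/2) := Real.Gamma_pos_of_pos (by linarith)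
    have g2 : 0 < Real.Gamma (1 - s) := Real.Gamma_pos_of_pos (by linarith)
    have h1 : (0:ℝ) < 2 ^ (2*s) := Real.rpow_pos_of_pos two_pos _
    have h2 : (0:ℝ) < Real.sqrt Real.pi := Real.sqrt_pos.mpr Real.pi_pos
    rw [hC1s]; positivity
  have hpow : (0:ℝ) < (2:ℝ) ^ (2+3*s) := Real.rpow_pos_of_pos two_pos _
  set D : ℝ := C1s * c / (2:ℝ) ^ (2+3*s) with hD
  have hDpos : 0 < D := by positivity
  refine ⟨D/2, by positivity, ?_⟩
  rintro x ⟨hx1, hx2⟩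
  set t : ℝ := x - 1 with ht
  have ht0 : 0 < t := by simp [ht]; linarith
  have hts : 0 < t ^ s := Real.rpow_pos_of_pos ht0 _
  -- u x = 0
  have hux : u x = 0 := by
    rw [hu x, max_eq_right (by nlinarith), Real.zero_rpow hs0.ne', mul_zero]
  -- f nonneg
  set f : ℝ → ℝ := fun y => u y / |x - y| ^ (1 + 2*s) with hf
  have hfnn : ∀ y, 0 ≤ f y := fun y => div_nonneg
    (by rw [hu y]; positivity) (Real.rpow_nonneg (abs_nonneg _) _)
  -- continuity / integrability
  have hucont : Continuous u := by
    have : u = fun y => c * (max (1 - y^2) 0) ^ s := funext hu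
    rw [this]
    exact continuous_const.mul (((continuous_const.sub (continuous_pow 2)).max
      continuous_const).rpow_const fun y => Or.inr hs0.le)
  have hcont : ContinuousOn f (Icc (-1:ℝ) 1) := by
    apply hucont.continuousOn.div
    · exact ContinuousOn.rpow_const ((continuous_const.sub continuous_id).abs.continuousOn)
        (fun y hy => Or.inl (by have := hy.2; simp only [abs_ne_zero]; intro h; nlinarith [sub_eq_zero.mp h]))
    · intro y hy
      have : (0:ℝ) < |x - y| := abs_pos.mpr (by have := hy.2; intro h; nlinarith [sub_eq_zero.mp h])
      exact (Real.rpow_pos_of_pos this _).ne'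
  have hint : IntegrableOn f (Ioo (-1:ℝ) 1) := (hcont.integrableOn_Icc).mono_set Ioo_subset_Icc_self
  -- J
  set J : ℝ := ∫ y in Ioo (-1:ℝ) 1, f y with hJ
  have hInt_eq : (∫ y in Ioo (-1:ℝ) 1, (u x - u y) / |x - y| ^ (1 + 2*s)) = -J := by
    rw [hJ, ← integral_neg]
    apply setIntegral_congr_fun measurableSet_Ioo
    intro y _
    simp [hf, hux, neg_div]
  -- sub-interval
  have hsub : Ioo (2-x) ((3-x)/2) ⊆ Ioo (-1:ℝ) 1 :=
    Ioo_subset_Ioo (by linarith) (by linarith)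
  set m : ℝ := c * (t/2) ^ s / (2*t) ^ (1+2*s) with hm
  have hlow : ∀ y ∈ Ioo (2-x) ((3-x)/2), m ≤ f y := by
    rintro y ⟨hy1, hy2⟩
    have hy0 : 0 < y := by linarith
    have hy1' : y < 1 := by linarith
    have hnum : c * (t/2) ^ s ≤ u y := by
      rw [hu y]
      apply mul_le_mul_of_nonneg_left _ hc.le
      apply Real.rpow_le_rpow (by positivity) _ hs0.le
      have : t/2 ≤ 1 - y^2 := by nlinarith
      exact le_trans this (le_max_left _ _)
    have hxy : 0 < x - y := by linarith
    have habs : |x - y| = x - y := abs_of_pos hxy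
    have hden : |x - y| ^ (1+2*s) ≤ (2*t) ^ (1+2*s) := by
      rw [habs]
      exact Real.rpow_le_rpow hxy.le (by simp [ht]; linarith) (by linarith)
    have hdpos : (0:ℝ) < |x - y| ^ (1+2*s) := Real.rpow_pos_of_pos (by rw [habs]; exact hxy) _
    exact div_le_div₀ (by rw [hu y]; positivity) hnum hdpos hden
  have hvol : (volume (Ioo (2-x) ((3-x)/2))).toReal = t/2 := by
    rw [Real.volume_Ioo, ENNReal.toReal_ofReal (by linarith)]
    ring
  have hA : m * (t/2) ≤ ∫ y in Ioo (2-x) ((3-x)/2), f y := by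
    have := setIntegral_ge_of_const_le (measurableSet_Ioo)
      (by rw [Real.volume_Ioo]; exact ENNReal.ofReal_ne_top) hlow
      (hint.mono_set hsub)
    rw [Measure.real, hvol, smul_eq_mul] at this
    linarith
  have hAJ : (∫ y in Ioo (2-x) ((3-x)/2), f y) ≤ J := by
    apply setIntegral_mono_set hint (Filter.Eventually.of_forall hfnn)
    exact HasSubset.Subset.eventuallyLE hsub
  -- algebra: m * (t/2) = c / (2^(2+3s) * t^s)
  have halg : m * (t/2) = c / ((2:ℝ) ^ (2+3*s) * t ^ s) := by
    have h1 : (t/2) ^ s = t ^ s / 2 ^ s := Real.div_rpow ht0.le (by norm_num : (0:ℝ) ≤ 2) s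
    have h2 : (2*t) ^ (1+2*s) = 2 ^ (1+2*s) * t ^ (1+2*s) :=
      Real.mul_rpow (by norm_num) ht0.le
    have h3 : t ^ (1+2*s) = t * (t ^ s * t ^ s) := by
      rw [Real.rpow_add ht0, Real.rpow_one, ← Real.rpow_add ht0]
      ring_nf
    have h4 : (2:ℝ) ^ (2+3*s) = 2 ^ s * 2 ^ (1+2*s) * 2 := by
      have e : (2:ℝ) ^ (2+3*s) = 2 ^ (s + (1+2*s) + 1) := by ring_nf
      rw [e, Real.rpow_add two_pos, Real.rpow_add two_pos, Real.rpow_one]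
    have h2s : (0:ℝ) < (2:ℝ) ^ s := Real.rpow_pos_of_pos two_pos _
    have h12s : (0:ℝ) < (2:ℝ) ^ (1+2*s) := Real.rpow_pos_of_pos two_pos _
    rw [hm, h1, h2, h3, h4]
    field_simp
  have hJlow : D / t ^ s ≤ C1s * J := by
    have : C1s * (m * (t/2)) ≤ C1s * J :=
      mul_le_mul_of_nonneg_left (le_trans hA hAJ) hC1pos.le
    calc D / t ^ s = C1s * (m * (t/2)) := by
          rw [halg, hD]; field_simp
      _ ≤ C1s * J := this
  have hJnn : 0 ≤ J := setIntegral_nonneg measurableSet_Ioo fun y _ => hfnn y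
  have habsval : |C1s * ∫ y in Ioo (-1:ℝ) 1, (u x - u y) / |x - y| ^ (1 + 2*s)| = C1s * J := by
    rw [hInt_eq, mul_neg, abs_neg, abs_of_nonneg (by positivity)]
  rw [habsval]
  calc D/2 / t ^ s < D / t ^ s := by
        rw [div_div]
        exact div_lt_div_of_pos_left hDpos hts (by linarith)
    _ ≤ C1s * J := hJlow
end
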